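/- Let γ ∈ ℂ[[t]] be a root of F, i.e., f(γ(t), t^N) = 0. Suppose that for every root γ' ∈ ℂ[[t]] of F with γ' ≠ γ and every natural number k with k ≤ order(γ − γ'), the k-th coefficient of γ is real. Then every coefficient of γ is real. -/

import Mathlib

open PowerSeries

noncomputable def conjPS : PowerSeries ℂ →ₐ[ℝ] PowerSeries ℂ :=
  { PowerSeries.map (starRingEnd ℂ) with
    commutes' := by
      intro r
      ext n
      simp [PowerSeries.coeff_map, PowerSeries.algebraMap_apply, PowerSeries.coeff_C,
        apply_ite (starRingEnd ℂ)] }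

theorem root_real_of_truncation_real
    (f : MvPolynomial (Fin 2) ℝ) (hf : f ≠ 0) (N : ℕ) (hN : 0 < N)
    (γ : PowerSeries ℂ)
    (hroot : MvPolynomial.aeval ![γ, (PowerSeries.X : PowerSeries ℂ) ^ N] f = 0)
    (hcoef : ∀ γ' : PowerSeries ℂ,
      MvPolynomial.aeval ![γ', (PowerSeries.X : PowerSeries ℂ) ^ N] f = 0 → γ' ≠ γ →
      ∀ k : ℕ, (k : ℕ∞) ≤ (γ - γ').order → (PowerSeries.coeff k γ).im = 0) :
    ∀ k : ℕ, (PowerSeries.coeff k γ).im = 0 := by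
  set γ' := conjPS γ with hγ'
  have hXN : conjPS ((PowerSeries.X : PowerSeries ℂ) ^ N) = (PowerSeries.X : PowerSeries ℂ) ^ N := by
    simp [conjPS]
  have hroot' : MvPolynomial.aeval ![γ', (PowerSeries.X : PowerSeries ℂ) ^ N] f = 0 := by
    have h1 : conjPS (MvPolynomial.aeval ![γ, (PowerSeries.X : PowerSeries ℂ) ^ N] f) = 0 := by
      rw [hroot]; exact map_zero _
    rw [MvPolynomial.comp_aeval_apply] at h1
    have h2 : (fun i => conjPS (![γ, (PowerSeries.X : PowerSeries ℂ) ^ N] i))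
        = ![γ', (PowerSeries.X : PowerSeries ℂ) ^ N] := by
      funext i
      fin_cases i <;> simp [hγ', hXN]
    rw [h2] at h1
    exact h1
  by_cases heq : γ' = γ
  · intro k
    have h2 : PowerSeries.coeff k γ' = starRingEnd ℂ (PowerSeries.coeff k γ) := by
      simp [hγ', conjPS, PowerSeries.coeff_map]
    have := congrArg (PowerSeries.coeff k) heq
    rw [h2] at this
    have h3 := congrArg Complex.im this
    simp at h3
    linarith
  · exfalso
    have hne : γ - γ' ≠ 0 := sub_ne_zero.mpr (fun h => heq h.symm)
    have hlt : (γ - γ').order < ⊤ := PowerSeries.order_finite_iff_ne_zero.mpr hne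
    set m := ((γ - γ').order).lift hlt with hm
    have hmo : ((m : ℕ∞)) = (γ - γ').order := by simp [hm]
    have hco : PowerSeries.coeff m (γ - γ') ≠ 0 := by
      have h := PowerSeries.coeff_order hne; rwa [← hmo, ENat.toNat_coe] at h
    have him : (PowerSeries.coeff m γ).im = 0 := hcoef γ' hroot' heq m (le_of_eq hmo)
    apply hco
    have : PowerSeries.coeff m γ' = starRingEnd ℂ (PowerSeries.coeff m γ) := by
      simp [hγ', conjPS, PowerSeries.coeff_map]
    simp only [map_sub, this]
    rw [Complex.ext_iff]
    simp [Complex.conj_re, Complex.conj_im, him]
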